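/- Let μ ∈ 𝒫_ac(ℝ^d), let X_1,…,X_m, Y_1,…,Y_n be i.i.d. with law μ (the two-sample null hypothesis), and fix m+n distinct points h_1,…,h_{m+n} ∈ [0,1]^d. Let σ̂ be a measurable random permutation of {1,…,m+n} that is almost surely an optimal assignment of the pooled sample (X_1,…,X_m,Y_1,…,Y_n) to (h_1,…,h_{m+n}). Then the law of the rank energy statistic RE²_{m,n} equals the law of the same functional computed with the pooled empirical ranks replaced by (h_{π(1)},…,h_{π(m+n)}), where π is a uniformly distributed random permutation of {1,…,m+n}; in particular, the distribution of RE²_{m,n} is the same for every such μ. -/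

import Mathlib

open MeasureTheory ProbabilityTheory Filter Topology
open scoped ENNReal NNReal Classical

noncomputable section

/-- `Euc d` is the Euclidean space `ℝ^d` with its Euclidean norm. -/
abbrev Euc (d : ℕ) : Type := EuclideanSpace ℝ (Fin d)

/-- The unit cube `[0,1]^d`. -/
def unitCube (d : ℕ) : Set (Euc d) := {x | ∀ i, x i ∈ Set.Icc (0 : ℝ) 1}

/-- A permutation `σ` is an optimal assignment of the points `x` to the points `h` if it
minimizes `σ ↦ ∑ i ‖x i − h (σ i)‖²` over all permutations. -/
def IsOptAssign {d n : ℕ} (x h : Fin n → Euc d) (σ : Equiv.Perm (Fin n)) : Prop :=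
  ∀ τ : Equiv.Perm (Fin n), ∑ i, ‖x i - h (σ i)‖ ^ 2 ≤ ∑ i, ‖x i - h (τ i)‖ ^ 2

/-- The rank energy statistic `RE²_{m,n}`, as a function of the pooled empirical ranks
`r : Fin (m+n) → ℝ^d`, where the first `m` indices correspond to the `X`-sample and the last
`n` indices to the `Y`-sample. -/
def reStat {d : ℕ} (m n : ℕ) (r : Fin (m + n) → Euc d) : ℝ :=
  2 / ((m : ℝ) * n) *
      ∑ i : Fin m, ∑ j : Fin n, ‖r (Fin.castAdd n i) - r (Fin.natAdd m j)‖
    - 1 / (m : ℝ) ^ 2 *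
      ∑ i : Fin m, ∑ j : Fin m, ‖r (Fin.castAdd n i) - r (Fin.castAdd n j)‖
    - 1 / (n : ℝ) ^ 2 *
      ∑ i : Fin n, ∑ j : Fin n, ‖r (Fin.natAdd m i) - r (Fin.natAdd m j)‖

section Aux

open scoped RealInnerProductSpace

/-- The product Lebesgue measure on `(ℝ^d)^N` is an additive Haar measure. -/
instance pihaarAux (d N : ℕ) :
    (Measure.pi (fun _ : Fin N => (volume : Measure (Euc d)))).IsAddHaarMeasure := ⟨⟩

/-- Absolute continuity is preserved by finite products of measures. -/
lemma pi_ac {α : Type*} [MeasurableSpace α] (μ ν : Measure α) [SigmaFinite μ] [SigmaFinite ν]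
    (h : μ ≪ ν) : ∀ N : ℕ, Measure.pi (fun _ : Fin N => μ) ≪ Measure.pi (fun _ : Fin N => ν) := by
  intro N
  induction N with
  | zero => rw [Measure.pi_of_empty, Measure.pi_of_empty]
  | succ N ih =>
    have h1 := MeasureTheory.measurePreserving_piFinSuccAbove (fun _ : Fin (N+1) => μ) 0
    have h2 := MeasureTheory.measurePreserving_piFinSuccAbove (fun _ : Fin (N+1) => ν) 0
    have e1 := (h1.symm _).map_eq
    have e2 := (h2.symm _).map_eq
    rw [← e1, ← e2]
    exact (h.prod ih).map
      (MeasurableEquiv.piFinSuccAbove (fun _ : Fin (N+1) => α) 0).symm.measurable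

/-- A (nontrivial) affine hyperplane in `(ℝ^d)^N` is Lebesgue-null. -/
lemma hyperplane_null {d N : ℕ} (a : Fin N → Euc d) (i₀ : Fin N) (ha : a i₀ ≠ 0) (c : ℝ) :
    Measure.pi (fun _ : Fin N => (volume : Measure (Euc d)))
      {x | ∑ i, ⟪a i, x i⟫ = c} = 0 := by
  classical
  set L : (Fin N → Euc d) →ₗ[ℝ] ℝ :=
    ∑ i, (innerSL ℝ (a i)).toLinearMap.comp (LinearMap.proj i) with hL
  have hLapp : ∀ x, L x = ∑ i, ⟪a i, x i⟫ := by
    intro x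
    simp [hL, LinearMap.sum_apply]
  have hLne : L ≠ 0 := by
    intro h0
    have : L (Pi.single i₀ (a i₀)) = 0 := by rw [h0]; rfl
    rw [hLapp] at this
    rw [Finset.sum_eq_single i₀ (fun j _ hj => by simp [Pi.single_eq_of_ne hj])
      (by simp)] at this
    simp only [Pi.single_eq_same] at this
    exact ha (inner_self_eq_zero.mp this)
  obtain ⟨y, hy⟩ : ∃ y, L y ≠ 0 := by
    by_contra hcon
    push_neg at hcon
    exact hLne (LinearMap.ext fun y => hcon y)
  set x₀ : Fin N → Euc d := (c / L y) • y with hx₀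
  have hLx₀ : L x₀ = c := by
    rw [hx₀, L.map_smul, smul_eq_mul, div_mul_cancel₀ _ hy]
  have hset : {x | ∑ i, ⟪a i, x i⟫ = c}
      = (AffineSubspace.mk' x₀ (LinearMap.ker L) : Set (Fin N → Euc d)) := by
    ext z
    have : z ∈ AffineSubspace.mk' x₀ (LinearMap.ker L) ↔ L (z - x₀) = 0 := by
      rw [AffineSubspace.mem_mk']; rfl
    rw [Set.mem_setOf_eq, AffineSubspace.mem_coe, this, map_sub, hLx₀, sub_eq_zero, hLapp]
  rw [hset]
  refine Measure.addHaar_affineSubspace _ _ ?_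
  intro htop
  have hdir : (AffineSubspace.mk' x₀ (LinearMap.ker L)).direction = ⊤ := by
    rw [htop, AffineSubspace.direction_top]
  rw [AffineSubspace.direction_mk'] at hdir
  exact hLne (LinearMap.ker_eq_top.mp hdir)

/-- The set of pooled samples for which `σ` is an optimal assignment. -/
def optSet {d N : ℕ} (h : Fin N → Euc d) (σ : Equiv.Perm (Fin N)) : Set (Fin N → Euc d) :=
  {x | IsOptAssign x h σ}

lemma measurableSet_optSet {d N : ℕ} (h : Fin N → Euc d) (σ : Equiv.Perm (Fin N)) :
    MeasurableSet (optSet h σ) := by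
  have hc : ∀ ρ : Equiv.Perm (Fin N),
      Measurable fun x : Fin N → Euc d => ∑ i, ‖x i - h (ρ i)‖ ^ 2 := by
    intro ρ
    exact Finset.measurable_sum _ fun i _ =>
      (((measurable_pi_apply i).sub measurable_const).norm.pow measurable_const)
  have : optSet h σ = ⋂ τ : Equiv.Perm (Fin N),
      {x | ∑ i, ‖x i - h (σ i)‖ ^ 2 ≤ ∑ i, ‖x i - h (τ i)‖ ^ 2} := by
    ext x; simp [optSet, IsOptAssign, Set.mem_iInter]
  rw [this]
  exact MeasurableSet.iInter fun τ => measurableSet_le (hc σ) (hc τ)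

lemma exists_opt {d N : ℕ} (h : Fin N → Euc d) (x : Fin N → Euc d) :
    ∃ σ, x ∈ optSet h σ := by
  obtain ⟨σ, -, hσ⟩ := Finset.exists_min_image Finset.univ
    (fun ρ : Equiv.Perm (Fin N) => ∑ i, ‖x i - h (ρ i)‖ ^ 2) ⟨1, Finset.mem_univ 1⟩
  exact ⟨σ, fun τ => hσ τ (Finset.mem_univ τ)⟩

/-- Under an absolutely continuous law, ties between distinct optimal assignments are null. -/
lemma tie_null {d N : ℕ} (μ : Measure (Euc d)) [IsProbabilityMeasure μ] (hac : μ ≪ volume)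
    (h : Fin N → Euc d) (hinj : Function.Injective h)
    {σ τ : Equiv.Perm (Fin N)} (hst : σ ≠ τ) :
    Measure.pi (fun _ : Fin N => μ) (optSet h σ ∩ optSet h τ) = 0 := by
  obtain ⟨i₀, hi₀⟩ : ∃ i, σ i ≠ τ i := by
    by_contra hcon; push_neg at hcon
    exact hst (Equiv.ext hcon)
  set a : Fin N → Euc d := fun i => h (σ i) - h (τ i) with ha
  have hai₀ : a i₀ ≠ 0 := sub_ne_zero.2 fun e => hi₀ (hinj e)
  set c : ℝ := (∑ i, (‖h (σ i)‖ ^ 2 - ‖h (τ i)‖ ^ 2)) / 2 with hc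
  have hsub : optSet h σ ∩ optSet h τ ⊆ {x | ∑ i, ⟪a i, x i⟫ = c} := by
    rintro x ⟨h1, h2⟩
    have hFeq : ∑ i, ‖x i - h (σ i)‖ ^ 2 = ∑ i, ‖x i - h (τ i)‖ ^ 2 :=
      le_antisymm (h1 τ) (h2 σ)
    have key : ∀ i, ‖x i - h (σ i)‖ ^ 2 - ‖x i - h (τ i)‖ ^ 2
        = (‖h (σ i)‖ ^ 2 - ‖h (τ i)‖ ^ 2) - 2 * ⟪a i, x i⟫ := by
      intro i
      rw [ha]
      simp only [inner_sub_left]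
      rw [@norm_sub_sq_real, @norm_sub_sq_real, real_inner_comm (h (σ i)),
        real_inner_comm (h (τ i))]
      ring
    have h0 : (0:ℝ) = (∑ i, (‖h (σ i)‖ ^ 2 - ‖h (τ i)‖ ^ 2)) - 2 * ∑ i, ⟪a i, x i⟫ := by
      calc (0:ℝ) = ∑ i, (‖x i - h (σ i)‖ ^ 2 - ‖x i - h (τ i)‖ ^ 2) := by
            rw [Finset.sum_sub_distrib, hFeq, sub_self]
        _ = ∑ i, ((‖h (σ i)‖ ^ 2 - ‖h (τ i)‖ ^ 2) - 2 * ⟪a i, x i⟫) :=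
            Finset.sum_congr rfl fun i _ => key i
        _ = _ := by rw [Finset.sum_sub_distrib, Finset.mul_sum]
    show ∑ i, ⟪a i, x i⟫ = c
    rw [hc]; linarith [h0]
  refine measure_mono_null hsub ?_
  exact pi_ac μ volume hac N (hyperplane_null a i₀ hai₀ c)

/-- The product measure is exchangeable. -/
lemma map_perm_pi {d N : ℕ} (μ : Measure (Euc d)) [IsProbabilityMeasure μ]
    (π : Equiv.Perm (Fin N)) :
    Measure.map (fun x : Fin N → Euc d => fun i => x (π i)) (Measure.pi fun _ => μ)
      = Measure.pi fun _ => μ := by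
  have hmeas : Measurable (fun x : Fin N → Euc d => fun i => x (π i)) :=
    measurable_pi_lambda _ fun i => measurable_pi_apply (π i)
  refine (Measure.pi_eq fun s hs => ?_).symm
  rw [Measure.map_apply hmeas (MeasurableSet.univ_pi hs)]
  have hpre : (fun x : Fin N → Euc d => fun i => x (π i)) ⁻¹' Set.pi Set.univ s
      = Set.pi Set.univ (fun j => s (π.symm j)) := by
    ext x
    simp only [Set.mem_preimage, Set.mem_pi, Set.mem_univ, true_implies]
    constructor
    · intro hx j; have := hx (π.symm j); rwa [Equiv.apply_symm_apply] at this
    · intro hx i; have := hx (π i); rwa [Equiv.symm_apply_apply] at this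
  rw [hpre, Measure.pi_pi]
  exact Equiv.prod_comp π.symm fun j => μ (s j)

lemma preimage_optSet {d N : ℕ} (h : Fin N → Euc d) (π σ : Equiv.Perm (Fin N)) :
    (fun x : Fin N → Euc d => fun i => x (π i)) ⁻¹' optSet h σ = optSet h (σ * π⁻¹) := by
  have reindex : ∀ (x : Fin N → Euc d) (ρ : Equiv.Perm (Fin N)),
      ∑ i, ‖x (π i) - h (ρ i)‖ ^ 2 = ∑ j, ‖x j - h (ρ (π.symm j))‖ ^ 2 := by
    intro x ρ
    exact Fintype.sum_equiv π _ _ (fun i => by simp)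
  ext x
  simp only [Set.mem_preimage, optSet, Set.mem_setOf_eq, IsOptAssign]
  constructor
  · intro hx ρ
    have := hx (ρ * π)
    rw [reindex, reindex] at this
    simpa [Equiv.Perm.mul_apply, Equiv.Perm.inv_def] using this
  · intro hx τ
    have := hx (τ * π⁻¹)
    rw [reindex, reindex]
    simpa [Equiv.Perm.mul_apply, Equiv.Perm.inv_def] using this

/-- The joint law of an i.i.d. vector is the product measure. -/
lemma joint_law {d N : ℕ} {Ω : Type*} [MeasurableSpace Ω] (P : Measure Ω)
    [IsProbabilityMeasure P] (μ : Measure (Euc d)) [IsProbabilityMeasure μ]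
    (Z : Fin N → Ω → Euc d) (hZmeas : ∀ i, Measurable (Z i))
    (hindep : iIndepFun Z P)
    (hlaw : ∀ i, Measure.map (Z i) P = μ) :
    Measure.map (fun ω => fun i => Z i ω) P = Measure.pi fun _ => μ := by
  refine (Measure.pi_eq fun s hs => ?_).symm
  have hmeas : Measurable (fun ω => fun i => Z i ω) := measurable_pi_lambda _ hZmeas
  rw [Measure.map_apply hmeas (MeasurableSet.univ_pi hs)]
  have hpre : (fun ω => fun i => Z i ω) ⁻¹' Set.pi Set.univ s = ⋂ i, Z i ⁻¹' s i := by
    ext ω; simp [Set.mem_pi]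
  rw [hpre, hindep.meas_iInter (fun i => ⟨s i, hs i, rfl⟩)]
  refine Finset.prod_congr rfl fun i _ => ?_
  rw [← hlaw i, Measure.map_apply (hZmeas i) (hs i)]

end Aux

/-- Distribution-freeness of the rank energy statistic under the two-sample null: if the
pooled sample is i.i.d. from an absolutely continuous law, then the law of `RE²_{m,n}`
coincides with the law of the same functional with the pooled empirical ranks replaced by a
uniformly random ordering of the grid; in particular it is the same for every such `μ`. -/
theorem stmt13
    {d m n : ℕ} {Ω : Type*} [MeasurableSpace Ω] (P : Measure Ω) [IsProbabilityMeasure P]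
    (μ : Measure (Euc d)) [IsProbabilityMeasure μ] (hac : μ ≪ volume)
    (Z : Fin (m + n) → Ω → Euc d) (hZmeas : ∀ i, Measurable (Z i))
    (hindep : iIndepFun Z P)
    (hlaw : ∀ i, Measure.map (Z i) P = μ)
    (h : Fin (m + n) → Euc d) (hcube : ∀ i, h i ∈ unitCube d)
    (hinj : Function.Injective h)
    (σhat : Ω → Equiv.Perm (Fin (m + n)))
    (hσmeas : ∀ σ₀ : Equiv.Perm (Fin (m + n)), MeasurableSet {ω | σhat ω = σ₀})
    (hopt : ∀ᵐ ω ∂P, IsOptAssign (fun i => Z i ω) h (σhat ω)) :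
    ∀ B : Set ℝ, MeasurableSet B →
      P {ω | reStat m n (fun k => h (σhat ω k)) ∈ B}
        = ((Finset.univ.filter
              (fun π : Equiv.Perm (Fin (m + n)) =>
                reStat m n (fun k => h (π k)) ∈ B)).card : ℝ≥0∞)
          / (Nat.factorial (m + n) : ℝ≥0∞) := by
  classical
  intro B hB
  set ν : Measure (Fin (m + n) → Euc d) := Measure.pi (fun _ => μ) with hν
  have hmeasZ : Measurable (fun ω => fun i => Z i ω) := measurable_pi_lambda _ hZmeas
  have hjoint : Measure.map (fun ω => fun i => Z i ω) P = ν :=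
    joint_law P μ Z hZmeas hindep hlaw
  -- ties are null
  have tie : ∀ σ τ : Equiv.Perm (Fin (m + n)), σ ≠ τ → ν (optSet h σ ∩ optSet h τ) = 0 :=
    fun σ τ hst => tie_null μ hac h hinj hst
  -- the measure of `optSet h σ` does not depend on `σ`
  have hconst : ∀ σ τ : Equiv.Perm (Fin (m + n)), ν (optSet h σ) = ν (optSet h τ) := by
    intro σ τ
    have hπ := map_perm_pi (N := m + n) μ (τ⁻¹ * σ)
    have hmeasT : Measurable (fun x : Fin (m + n) → Euc d => fun i => x ((τ⁻¹ * σ) i)) :=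
      measurable_pi_lambda _ fun i => measurable_pi_apply _
    calc ν (optSet h σ)
        = (Measure.map (fun x : Fin (m + n) → Euc d => fun i => x ((τ⁻¹ * σ) i)) ν)
            (optSet h σ) := by rw [hν, hπ]
      _ = ν ((fun x : Fin (m + n) → Euc d => fun i => x ((τ⁻¹ * σ) i)) ⁻¹' optSet h σ) :=
          Measure.map_apply hmeasT (measurableSet_optSet h σ)
      _ = ν (optSet h (σ * (τ⁻¹ * σ)⁻¹)) := by rw [preimage_optSet]
      _ = ν (optSet h τ) := by congr 1; group
  -- the tie set
  set Tie : Set (Fin (m + n) → Euc d) :=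
    ⋃ (σ) (τ) (_ : σ ≠ τ), optSet h σ ∩ optSet h τ with hTie
  have hTieMeas : MeasurableSet Tie :=
    MeasurableSet.iUnion fun σ => MeasurableSet.iUnion fun τ => MeasurableSet.iUnion fun _ =>
      (measurableSet_optSet h σ).inter (measurableSet_optSet h τ)
  have hTieNull : ν Tie = 0 :=
    measure_iUnion_null fun σ => measure_iUnion_null fun τ =>
      measure_iUnion_null fun hst => tie σ τ hst
  have hTiePre : P ((fun ω => fun i => Z i ω) ⁻¹' Tie) = 0 := by
    calc P ((fun ω => fun i => Z i ω) ⁻¹' Tie)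
        = (Measure.map (fun ω => fun i => Z i ω) P) Tie :=
          (Measure.map_apply hmeasZ hTieMeas).symm
      _ = 0 := by rw [hjoint, hTieNull]
  have hTieAe : ∀ᵐ ω ∂P, (fun i => Z i ω) ∉ Tie := by
    rw [ae_iff]
    simpa [Set.preimage, not_not] using hTiePre
  -- the key identity: P(σhat = σ₀) = ν (optSet h σ₀)
  have hkey : ∀ σ₀, P {ω | σhat ω = σ₀} = ν (optSet h σ₀) := by
    intro σ₀
    have hae : {ω | σhat ω = σ₀} =ᵐ[P] ((fun ω => fun i => Z i ω) ⁻¹' optSet h σ₀) := by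
      rw [Filter.eventuallyEq_set]
      filter_upwards [hopt, hTieAe] with ω hω hT
      constructor
      · intro he
        simpa [Set.mem_preimage, optSet, he] using hω
      · intro hx
        by_contra hne
        refine hT ?_
        refine Set.mem_iUnion.2 ⟨σ₀, Set.mem_iUnion.2 ⟨σhat ω, Set.mem_iUnion.2
          ⟨fun e => hne e.symm, hx, hω⟩⟩⟩
    calc P {ω | σhat ω = σ₀}
        = P ((fun ω => fun i => Z i ω) ⁻¹' optSet h σ₀) := measure_congr hae
      _ = (Measure.map (fun ω => fun i => Z i ω) P) (optSet h σ₀) :=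
          (Measure.map_apply hmeasZ (measurableSet_optSet h σ₀)).symm
      _ = ν (optSet h σ₀) := by rw [hjoint]
  set c : ℝ≥0∞ := ν (optSet h 1) with hcdef
  have hσc : ∀ σ₀, P {ω | σhat ω = σ₀} = c := fun σ₀ => by
    rw [hkey σ₀, hconst σ₀ 1]
  -- disjointness of the level sets of σhat
  have hdisj : ∀ (s : Finset (Equiv.Perm (Fin (m + n)))),
      (s : Set (Equiv.Perm (Fin (m + n)))).PairwiseDisjoint
        (fun σ₀ => {ω | σhat ω = σ₀}) := by
    intro s σ _ τ _ hst
    refine Set.disjoint_left.2 fun ω hω1 hω2 => hst ?_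
    exact hω1.symm.trans hω2
  -- total mass: (m+n)! * c = 1
  have hfact : ((m + n).factorial : ℝ≥0∞) * c = 1 := by
    have hcover : (Set.univ : Set Ω)
        = ⋃ σ₀ ∈ (Finset.univ : Finset (Equiv.Perm (Fin (m + n)))), {ω | σhat ω = σ₀} := by
      ext ω; simp
    have hsum := measure_biUnion_finset (μ := P) (hdisj Finset.univ) (fun σ₀ _ => hσmeas σ₀)
    have h1 : (1 : ℝ≥0∞) = ∑ σ₀ : Equiv.Perm (Fin (m + n)), P {ω | σhat ω = σ₀} := by
      rw [← measure_univ (μ := P), hcover, hsum]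
    calc ((m + n).factorial : ℝ≥0∞) * c
        = ∑ _σ₀ : Equiv.Perm (Fin (m + n)), c := by
          rw [Finset.sum_const, Finset.card_univ, Fintype.card_perm, Fintype.card_fin,
            nsmul_eq_mul]
      _ = ∑ σ₀ : Equiv.Perm (Fin (m + n)), P {ω | σhat ω = σ₀} :=
          Finset.sum_congr rfl fun σ₀ _ => (hσc σ₀).symm
      _ = 1 := h1.symm
  have hne : ((m + n).factorial : ℝ≥0∞) ≠ 0 := by
    simp [Nat.factorial_ne_zero]
  have hnetop : ((m + n).factorial : ℝ≥0∞) ≠ ⊤ := ENNReal.natCast_ne_top _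
  have hcval : c = (((m + n).factorial : ℝ≥0∞))⁻¹ := by
    calc c = (((m + n).factorial : ℝ≥0∞))⁻¹ * (((m + n).factorial : ℝ≥0∞) * c) := by
          rw [← mul_assoc, ENNReal.inv_mul_cancel hne hnetop, one_mul]
      _ = (((m + n).factorial : ℝ≥0∞))⁻¹ := by rw [hfact, mul_one]
  -- decompose the event according to the value of σhat
  have hEvent : {ω | reStat m n (fun k => h (σhat ω k)) ∈ B}
      = ⋃ σ₀ ∈ Finset.univ.filter
          (fun π : Equiv.Perm (Fin (m + n)) => reStat m n (fun k => h (π k)) ∈ B),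
        {ω | σhat ω = σ₀} := by
    ext ω
    simp only [Set.mem_setOf_eq, Set.mem_iUnion, Finset.mem_filter, Finset.mem_univ, true_and,
      exists_prop]
    constructor
    · intro hω; exact ⟨σhat ω, hω, rfl⟩
    · rintro ⟨σ₀, hσ₀, he⟩
      rw [he]; exact hσ₀
  rw [hEvent, measure_biUnion_finset (hdisj _) (fun σ₀ _ => hσmeas σ₀)]
  rw [Finset.sum_congr rfl fun σ₀ _ => hσc σ₀, Finset.sum_const, nsmul_eq_mul, hcval,
    div_eq_mul_inv]

end
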